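/- Let F be a field, σ, τ ∈ {+1, -1}, and k a positive integer. Define M^σ_k as the 2k×2k block-diagonal matrix with k diagonal blocks [[0,1],[σ,0]]. Then the pair of (2k+1)×(2k+1) matrices (0₁ ⊕ M^σ_k, M^τ_k ⊕ 0₁) is equivalent to (F_k, G_k) ⊕ (F_kᵀ, G_kᵀ), where F_k = [I_k | 0] and G_k = [0 | I_k] are the k×(k+1) matrices with identity in the first (resp. last) k columns. -/

import Mathlib

open Matrix

/-- Equivalence of pairs of square matrices: `(A,B) ≈ (A',B')` iff there are
nonsingular `R`, `S` with `R*A*S = A'` and `R*B*S = B'`. -/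
def PairEquiv {F : Type*} [Field F] {n : ℕ} (A B A' B' : Matrix (Fin n) (Fin n) F) : Prop :=
  ∃ R S : Matrix (Fin n) (Fin n) F, IsUnit R ∧ IsUnit S ∧ R * A * S = A' ∧ R * B * S = B'

/-- Row permutation for the equivalence. -/
def stmt7rho (k : ℕ) (i : Fin (2 * k + 1)) : Fin (2 * k + 1) :=
  ⟨if (i : ℕ) < k then 2 * k - 1 - 2 * (i : ℕ) else 4 * k - 2 * (i : ℕ), by
    have := i.isLt; split <;> omega⟩

/-- Column permutation for the equivalence. -/
def stmt7sigma (k : ℕ) (j : Fin (2 * k + 1)) : Fin (2 * k + 1) :=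
  ⟨if (j : ℕ) ≤ k then 2 * k - 2 * (j : ℕ) else 4 * k + 1 - 2 * (j : ℕ), by
    have := j.isLt; split <;> omega⟩

/-- Row scaling factors. -/
def stmt7rv {F : Type*} [Field F] (k : ℕ) (s t : F) (i : Fin (2 * k + 1)) : F :=
  if (i : ℕ) < k then (if (i : ℕ) % 2 = 0 then 1 else t)
  else (if ((i : ℕ) - k) % 2 = 0 then s else 1)

/-- Column scaling factors. -/
def stmt7cv {F : Type*} [Field F] (k : ℕ) (s t : F) (j : Fin (2 * k + 1)) : F :=
  if (j : ℕ) ≤ k then (if (j : ℕ) % 2 = 0 then 1 else t)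
  else (if ((j : ℕ) - k - 1) % 2 = 0 then 1 else s)

set_option maxHeartbeats 1600000 in
theorem stmt_7 (F : Type*) [Field F] (k : ℕ) (hk : 0 < k)
    (s t : F) (hs : s = 1 ∨ s = -1) (ht : t = 1 ∨ t = -1) :
    PairEquiv
      -- 0₁ ⊕ M^σ_k
      (Matrix.of fun i j : Fin (2 * k + 1) =>
        if (j : ℕ) = (i : ℕ) + 1 ∧ (i : ℕ) % 2 = 1 then (1 : F)
        else if (i : ℕ) = (j : ℕ) + 1 ∧ (j : ℕ) % 2 = 1 then s else 0)
      -- M^τ_k ⊕ 0₁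
      (Matrix.of fun i j : Fin (2 * k + 1) =>
        if (j : ℕ) = (i : ℕ) + 1 ∧ (i : ℕ) % 2 = 0 then (1 : F)
        else if (i : ℕ) = (j : ℕ) + 1 ∧ (j : ℕ) % 2 = 0 then t else 0)
      -- F_k ⊕ F_kᵀ
      (Matrix.of fun i j : Fin (2 * k + 1) =>
        if ((i : ℕ) = j ∧ (i : ℕ) < k) ∨ ((j : ℕ) = (i : ℕ) + 1 ∧ k ≤ (i : ℕ)) then (1 : F)
        else 0)
      -- G_k ⊕ G_kᵀ
      (Matrix.of fun i j : Fin (2 * k + 1) =>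
        if ((j : ℕ) = (i : ℕ) + 1 ∧ (i : ℕ) < k) ∨ ((i : ℕ) = j ∧ k + 1 ≤ (j : ℕ)) then (1 : F)
        else 0) := by
  have hs2 : s * s = 1 := by rcases hs with h | h <;> simp [h]
  have ht2 : t * t = 1 := by rcases ht with h | h <;> simp [h]
  set R : Matrix (Fin (2 * k + 1)) (Fin (2 * k + 1)) F :=
    Matrix.of fun i p => if p = stmt7rho k i then stmt7rv k s t i else 0 with hR
  set S : Matrix (Fin (2 * k + 1)) (Fin (2 * k + 1)) F :=
    Matrix.of fun p j => if p = stmt7sigma k j then stmt7cv k s t j else 0 with hS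
  have hrv2 : ∀ i, stmt7rv k s t i * stmt7rv k s t i = 1 := by
    intro i
    unfold stmt7rv
    split_ifs <;> simp [hs2, ht2]
  have hcv2 : ∀ j, stmt7cv k s t j * stmt7cv k s t j = 1 := by
    intro j
    unfold stmt7cv
    split_ifs <;> simp [hs2, ht2]
  have hrinj : Function.Injective (stmt7rho k) := by
    intro a b hab
    have ha := a.isLt; have hb := b.isLt
    have : (stmt7rho k a : ℕ) = (stmt7rho k b : ℕ) := by rw [hab]
    unfold stmt7rho at this
    simp only [Fin.val_mk] at this
    apply Fin.ext
    split_ifs at this <;> omega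
  have hsinj : Function.Injective (stmt7sigma k) := by
    intro a b hab
    have ha := a.isLt; have hb := b.isLt
    have : (stmt7sigma k a : ℕ) = (stmt7sigma k b : ℕ) := by rw [hab]
    unfold stmt7sigma at this
    simp only [Fin.val_mk] at this
    apply Fin.ext
    split_ifs at this <;> omega
  have hRmul : ∀ (M : Matrix (Fin (2 * k + 1)) (Fin (2 * k + 1)) F) i q,
      (R * M) i q = stmt7rv k s t i * M (stmt7rho k i) q := by
    intro M i q
    simp [hR, Matrix.mul_apply, ite_mul, Finset.sum_ite_eq']
  have hSmul : ∀ (M : Matrix (Fin (2 * k + 1)) (Fin (2 * k + 1)) F) p j,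
      (M * S) p j = M p (stmt7sigma k j) * stmt7cv k s t j := by
    intro M p j
    simp [hS, Matrix.mul_apply, mul_ite, Finset.sum_ite_eq]
  have hRunit : IsUnit R := by
    have h1 : R * Rᵀ = 1 := by
      ext i i'
      rw [hRmul]
      simp only [Matrix.transpose_apply, hR, Matrix.of_apply, Matrix.one_apply, mul_ite, mul_zero]
      by_cases h : i = i'
      · subst h; simp [hrv2]
      · rw [if_neg (fun he => h (hrinj he)), if_neg h]
    have := invertibleOfRightInverse (a := R) (b := Rᵀ) h1
    exact isUnit_of_invertible R
  have hSunit : IsUnit S := by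
    have h1 : Sᵀ * S = 1 := by
      ext j j'
      rw [hSmul]
      simp only [Matrix.transpose_apply, hS, Matrix.of_apply, Matrix.one_apply, ite_mul, zero_mul]
      by_cases h : j = j'
      · subst h; simp [hcv2]
      · rw [if_neg (fun he => h (hsinj he.symm)), if_neg h]
    have := invertibleOfLeftInverse (a := S) (b := Sᵀ) h1
    exact isUnit_of_invertible S
  refine ⟨R, S, hRunit, hSunit, ?_, ?_⟩
  · ext i j
    rw [hSmul, hRmul]
    obtain ⟨i, hi⟩ := i
    obtain ⟨j, hj⟩ := j
    simp only [stmt7rho, stmt7sigma, stmt7rv, stmt7cv, Matrix.of_apply, Fin.val_mk]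
    split_ifs <;>
      first
        | omega
        | (exfalso; omega)
        | linear_combination ht2
        | linear_combination hs2
        | ring
  · ext i j
    rw [hSmul, hRmul]
    obtain ⟨i, hi⟩ := i
    obtain ⟨j, hj⟩ := j
    simp only [stmt7rho, stmt7sigma, stmt7rv, stmt7cv, Matrix.of_apply, Fin.val_mk]
    split_ifs <;>
      first
        | omega
        | (exfalso; omega)
        | linear_combination ht2
        | linear_combination hs2
        | ring
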